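/- If e is an edge of a finite connected simple graph G, then gp(G)/2 ≤ gp(G − e) ≤ 2 · gp(G), where G − e is the graph obtained from G by deleting the edge e. -/
import Mathlib


open SimpleGraph

variable {V : Type*}

/-- `S` is a general position set of `G`: no three pairwise distinct vertices of `S`
(lying in a common component) lie on a common shortest path, i.e. no `v ∈ S` lies
strictly between `u, w ∈ S`. -/
def IsGPSet (G : SimpleGraph V) (S : Set V) : Prop :=
  ∀ u ∈ S, ∀ v ∈ S, ∀ w ∈ S, u ≠ v → v ≠ w → u ≠ w →
    ¬(G.Reachable u w ∧ G.dist u v + G.dist v w = G.dist u w)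

/-- The general position number of `G`. -/
noncomputable def gpNum (G : SimpleGraph V) [Fintype V] : ℕ :=
  sSup {n | ∃ S : Finset V, IsGPSet G ↑S ∧ S.card = n}

/-- Any walk through the edge `s(x,y)` has length at least one of the two obvious bounds. -/
lemma walk_through_edge_bound {G : SimpleGraph V} (hG : G.Connected) {x y a b : V}
    (p : G.Walk a b) (hp : s(x, y) ∈ p.edges) :
    G.dist a x + 1 + G.dist y b ≤ p.length ∨
      G.dist a y + 1 + G.dist x b ≤ p.length := by
  induction p with
  | nil => simp at hp
  | @cons a c b h q ih =>
    rw [Walk.edges_cons, List.mem_cons] at hp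
    rcases hp with hp | hp
    · rw [Sym2.eq_iff] at hp
      rcases hp with ⟨hx, hy⟩ | ⟨hx, hy⟩
      · subst hx; subst hy
        left
        have := G.dist_le q
        simp only [Walk.length_cons, dist_self]
        omega
      · subst hx; subst hy
        right
        have := G.dist_le q
        simp only [Walk.length_cons, dist_self]
        omega
    · have hac : G.dist a c ≤ 1 := G.dist_le h.toWalk
      rcases ih hp with h1 | h1
      · left
        have h2 : G.dist a x ≤ G.dist a c + G.dist c x := hG.dist_triangle
        simp only [Walk.length_cons]
        omega
      · right
        have h2 : G.dist a y ≤ G.dist a c + G.dist c y := hG.dist_triangle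
        simp only [Walk.length_cons]
        omega

/-- Key lemma: between two vertices that are (weakly) closer to `x` than to `y`,
deleting the edge `s(x,y)` changes neither reachability nor distance. -/
lemma deleteEdge_dist_eq {G : SimpleGraph V} (hG : G.Connected) {x y : V} (hxy : G.Adj x y)
    {a b : V} (ha : G.dist a x ≤ G.dist a y) (hb : G.dist b x ≤ G.dist b y) :
    (G.deleteEdges {s(x, y)}).Reachable a b ∧
      (G.deleteEdges {s(x, y)}).dist a b = G.dist a b := by
  obtain ⟨p, hp⟩ := hG.exists_walk_length_eq_dist a b
  have hedge : s(x, y) ∉ p.edges := by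
    intro hmem
    rcases walk_through_edge_bound hG p hmem with h1 | h1
    · have h2 : G.dist a b ≤ G.dist a x + G.dist x b := hG.dist_triangle
      have hc1 : G.dist x b = G.dist b x := SimpleGraph.dist_comm
      have hc2 : G.dist y b = G.dist b y := SimpleGraph.dist_comm
      omega
    · have h2 : G.dist a b ≤ G.dist a x + G.dist x b := hG.dist_triangle
      omega
  have hforall : ∀ e' ∈ p.edges, e' ∉ ({s(x, y)} : Set (Sym2 V)) := by
    intro e' he' hmem
    rw [Set.mem_singleton_iff] at hmem
    exact hedge (hmem ▸ he')
  have hqlen : (p.toDeleteEdges {s(x, y)} hforall).length = p.length :=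
    Walk.length_transfer p _
  refine ⟨⟨p.toDeleteEdges {s(x, y)} hforall⟩, le_antisymm ?_ ?_⟩
  · calc (G.deleteEdges {s(x, y)}).dist a b ≤ _ := dist_le (p.toDeleteEdges {s(x, y)} hforall)
      _ = G.dist a b := by rw [hqlen, hp]
  · obtain ⟨r, hr⟩ := (Reachable.exists_walk_length_eq_dist ⟨p.toDeleteEdges {s(x, y)} hforall⟩)
    calc G.dist a b ≤ (r.mapLe (G.deleteEdges_le _)).length := G.dist_le _
      _ = (G.deleteEdges {s(x, y)}).dist a b := by rw [Walk.length_map, hr]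

/-- On a set of vertices all weakly closer to `x`, general position transfers
both ways between `G` and `G` minus the edge `s(x,y)`. -/
lemma gp_transfer {G : SimpleGraph V} (hG : G.Connected) {x y : V} (hxy : G.Adj x y)
    {T : Set V} (hT : ∀ s ∈ T, G.dist s x ≤ G.dist s y) :
    (IsGPSet G T ↔ IsGPSet (G.deleteEdges {s(x, y)}) T) := by
  constructor
  · intro hgp u hu v hv w hw huv hvw huw ⟨hre, hsum⟩
    refine hgp u hu v hv w hw huv hvw huw ⟨hG u w, ?_⟩
    rw [← (deleteEdge_dist_eq hG hxy (hT u hu) (hT v hv)).2,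
      ← (deleteEdge_dist_eq hG hxy (hT v hv) (hT w hw)).2,
      ← (deleteEdge_dist_eq hG hxy (hT u hu) (hT w hw)).2]
    exact hsum
  · intro hgp u hu v hv w hw huv hvw huw ⟨hre, hsum⟩
    refine hgp u hu v hv w hw huv hvw huw
      ⟨(deleteEdge_dist_eq hG hxy (hT u hu) (hT w hw)).1, ?_⟩
    rw [(deleteEdge_dist_eq hG hxy (hT u hu) (hT v hv)).2,
      (deleteEdge_dist_eq hG hxy (hT v hv) (hT w hw)).2,
      (deleteEdge_dist_eq hG hxy (hT u hu) (hT w hw)).2]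
    exact hsum

lemma gpSet_bddAbove (G : SimpleGraph V) [Fintype V] :
    BddAbove {n | ∃ S : Finset V, IsGPSet G ↑S ∧ S.card = n} := by
  refine ⟨Fintype.card V, fun n ⟨S, _, hc⟩ => ?_⟩
  exact hc ▸ S.card_le_univ

lemma card_le_gpNum (G : SimpleGraph V) [Fintype V] {S : Finset V}
    (hS : IsGPSet G ↑S) : S.card ≤ gpNum G :=
  le_csSup (gpSet_bddAbove G) ⟨S, hS, rfl⟩

lemma exists_gpNum_set (G : SimpleGraph V) [Fintype V] :
    ∃ S : Finset V, IsGPSet G ↑S ∧ S.card = gpNum G := by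
  have hne : {n | ∃ S : Finset V, IsGPSet G ↑S ∧ S.card = n}.Nonempty :=
    ⟨0, ∅, by simp [IsGPSet], rfl⟩
  exact Nat.sSup_mem hne (gpSet_bddAbove G)

/-- `gp(G)/2 ≤ gp(G - e) ≤ 2 gp(G)` for every edge `e` of a connected graph `G`,
where the lower bound `gp(G)/2 ≤ gp(G - e)` is expressed as `gp(G) ≤ 2 gp(G - e)`. -/
theorem gp_deleteEdge_bounds [Fintype V] (G : SimpleGraph V)
    (hG : G.Connected) (e : Sym2 V) (he : e ∈ G.edgeSet) :
    gpNum G ≤ 2 * gpNum (G.deleteEdges {e}) ∧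
      gpNum (G.deleteEdges {e}) ≤ 2 * gpNum G := by
  induction e using Sym2.ind with
  | _ x y =>
  rw [mem_edgeSet] at he
  have key : ∀ S : Finset V, ∀ {G₁ G₂ : SimpleGraph V},
      (∀ T : Set V, (∀ s ∈ T, G.dist s x ≤ G.dist s y) → IsGPSet G₁ T → IsGPSet G₂ T) →
      (∀ T : Set V, (∀ s ∈ T, G.dist s y ≤ G.dist s x) → IsGPSet G₁ T → IsGPSet G₂ T) →
      [Fintype V] → IsGPSet G₁ ↑S → S.card ≤ 2 * gpNum G₂ := by
    intro S G₁ G₂ k1 k2 _ hS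
    classical
    set S₁ := S.filter (fun s => G.dist s x ≤ G.dist s y) with hS₁
    set S₂ := S.filter (fun s => ¬ G.dist s x ≤ G.dist s y) with hS₂
    have hcard : S₁.card + S₂.card = S.card := Finset.card_filter_add_card_filter_not (p := fun s => G.dist s x ≤ G.dist s y)
    have h1 : IsGPSet G₂ ↑S₁ := by
      refine k1 _ (fun s hs => ?_) ?_
      · simp only [hS₁, Finset.coe_filter, Set.mem_setOf_eq] at hs; exact hs.2
      · intro u hu v hv w hw; simp only [hS₁, Finset.coe_filter, Set.mem_setOf_eq] at hu hv hw
        exact hS u hu.1 v hv.1 w hw.1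
    have h2 : IsGPSet G₂ ↑S₂ := by
      refine k2 _ (fun s hs => ?_) ?_
      · simp only [hS₂, Finset.coe_filter, Set.mem_setOf_eq] at hs; omega
      · intro u hu v hv w hw; simp only [hS₂, Finset.coe_filter, Set.mem_setOf_eq] at hu hv hw
        exact hS u hu.1 v hv.1 w hw.1
    have := card_le_gpNum G₂ h1
    have := card_le_gpNum G₂ h2
    omega
  have hswap : (s(x, y) : Sym2 V) = s(y, x) := Sym2.eq_swap
  constructor
  · obtain ⟨S, hS, hc⟩ := exists_gpNum_set G
    rw [← hc]
    refine key S (fun T hT h => (gp_transfer hG he hT).1 h)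
      (fun T hT h => ?_) hS
    rw [hswap]
    exact (gp_transfer hG he.symm hT).1 h
  · obtain ⟨S, hS, hc⟩ := exists_gpNum_set (G.deleteEdges {s(x, y)})
    rw [← hc]
    refine key S (fun T hT h => (gp_transfer hG he hT).2 h)
      (fun T hT h => ?_) hS
    rw [hswap] at h
    exact (gp_transfer hG he.symm hT).2 h
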